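/- There exist a constant C > 0 and an integer K such that for every integer k ≥ K with k+1 prime, ĝ(k+1)/ĝ(k) ≥ C · log k. -/

import Mathlib

open Finset Filter Real Asymptotics

/-- `digit i p k` is the `i`-th digit of `k` in base `p`, i.e. `⌊k / p^i⌋ mod p`. -/
def digit (i p k : ℕ) : ℕ := (k / p ^ i) % p

/-- `Mk k = ∏_{p ≤ k, p prime} p^(⌊log_p k⌋ + 1)`. -/
def Mk (k : ℕ) : ℕ :=
  ∏ p ∈ (Finset.range (k + 1)).filter Nat.Prime, p ^ (Nat.log p k + 1)

/-- `Rk k = ∏_{p ≤ k, p prime} ∏_{i=0}^{⌊log_p k⌋} (p − a_{i,p}(k))`. -/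
def Rk (k : ℕ) : ℕ :=
  ∏ p ∈ (Finset.range (k + 1)).filter Nat.Prime,
    ∏ i ∈ Finset.range (Nat.log p k + 1), (p - digit i p k)

/-- The heuristic estimate `ĝ(k) = M_k / R_k` for the Erdős–Selfridge function. -/
def ghat (k : ℕ) : ℚ := (Mk k : ℚ) / (Rk k : ℚ)

/-! ### Auxiliary definitions and lemmas -/

/-- The set of primes `≤ k`. -/
def Pfin (k : ℕ) : Finset ℕ := (Finset.range (k + 1)).filter Nat.Prime

lemma digit_lt {p : ℕ} (hp : 2 ≤ p) (i k : ℕ) : digit i p k < p :=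
  Nat.mod_lt _ (by omega)

/-- Real-product form of `ghat`. -/
noncomputable def Fr (k : ℕ) : ℝ :=
  ∏ p ∈ Pfin k, ∏ i ∈ Finset.range (Nat.log p k + 1),
    (p : ℝ) / ((p : ℝ) - (digit i p k : ℝ))

lemma ghat_cast (k : ℕ) : ((ghat k : ℚ) : ℝ) = Fr k := by
  have hM : ((Mk k : ℕ) : ℝ)
      = ∏ p ∈ Pfin k, ∏ i ∈ Finset.range (Nat.log p k + 1), (p : ℝ) := by
    rw [Mk]
    push_cast
    refine Finset.prod_congr rfl fun p hp => ?_
    rw [Finset.prod_const, Finset.card_range]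
  have hR : ((Rk k : ℕ) : ℝ)
      = ∏ p ∈ Pfin k, ∏ i ∈ Finset.range (Nat.log p k + 1),
          ((p : ℝ) - (digit i p k : ℝ)) := by
    rw [Rk]
    push_cast [Nat.cast_prod]
    refine Finset.prod_congr rfl fun p hp => Finset.prod_congr rfl fun i _ => ?_
    have hp2 := (Finset.mem_filter.mp hp).2.two_le
    rw [Nat.cast_sub (le_of_lt (digit_lt hp2 i k))]
  rw [ghat]
  push_cast
  rw [hM, hR, Fr, ← Finset.prod_div_distrib]
  exact Finset.prod_congr rfl fun p hp => (Finset.prod_div_distrib _ _).symm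

lemma Fr_pos (k : ℕ) : 0 < Fr k := by
  refine Finset.prod_pos fun p hp => Finset.prod_pos fun i _ => ?_
  have hp2 := (Finset.mem_filter.mp hp).2.two_le
  have hd := digit_lt hp2 i k
  have : (digit i p k : ℝ) < (p : ℝ) := by exact_mod_cast hd
  have : (0:ℝ) < (p:ℝ) - digit i p k := by linarith
  positivity

lemma sum_inv_le_prod_sum (k : ℕ) :
    ∑ n ∈ Finset.Icc 1 k, ((n : ℝ))⁻¹
      ≤ ∏ p ∈ Pfin k, ∑ i ∈ Finset.range (Nat.log p k + 1), ((p : ℝ)⁻¹) ^ i := by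
  classical
  rcases Nat.eq_zero_or_pos k with rfl | hk
  · simp
  rw [Finset.prod_sum]
  set G : ℕ → (∀ a ∈ Pfin k, ℕ) := fun n => fun p _ => n.factorization p with hG
  have hprod : ∀ n ∈ Finset.Icc 1 k, ∏ p ∈ Pfin k, p ^ n.factorization p = n := by
    intro n hn
    obtain ⟨h1, h2⟩ := Finset.mem_Icc.mp hn
    have hn0 : n ≠ 0 := by omega
    have hsub : n.primeFactors ⊆ Pfin k := by
      intro p hp
      rw [Nat.mem_primeFactors] at hp
      have hle : p ≤ n := Nat.le_of_dvd (by omega) hp.2.1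
      exact Finset.mem_filter.mpr ⟨Finset.mem_range.mpr (by omega), hp.1⟩
    have hfact : ∏ p ∈ n.primeFactors, p ^ n.factorization p = n :=
      Nat.factorization_prod_pow_eq_self hn0
    refine Eq.trans (Eq.symm (Finset.prod_subset hsub fun p _ hp => ?_)) hfact
    rw [← Nat.support_factorization] at hp
    rw [Finsupp.notMem_support_iff.mp hp, pow_zero]
  have hinj : ∀ n ∈ Finset.Icc 1 k, ∀ m ∈ Finset.Icc 1 k, G n = G m → n = m := by
    intro n hn m hm h
    rw [← hprod n hn, ← hprod m hm]
    refine Finset.prod_congr rfl fun p hp => ?_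
    have := congrFun (congrFun h p) hp
    simp only [hG] at this
    rw [this]
  have himg : (Finset.Icc 1 k).image G
      ⊆ (Pfin k).pi fun p => Finset.range (Nat.log p k + 1) := by
    intro g hg
    rw [Finset.mem_image] at hg
    obtain ⟨n, hn, rfl⟩ := hg
    rw [Finset.mem_pi]
    intro p hp
    obtain ⟨h1, h2⟩ := Finset.mem_Icc.mp hn
    have hpp : Nat.Prime p := (Finset.mem_filter.mp hp).2
    have hle : p ^ n.factorization p ≤ k :=
      le_trans (Nat.le_of_dvd (by omega) (Nat.ordProj_dvd n p)) h2
    have := (Nat.le_log_iff_pow_le hpp.one_lt (by omega : k ≠ 0)).mpr hle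
    rw [Finset.mem_range]
    simp only [hG]
    omega
  have hterm : ∀ n ∈ Finset.Icc 1 k,
      ((n : ℝ))⁻¹ = ∏ x ∈ (Pfin k).attach, ((x.1 : ℝ)⁻¹) ^ (G n x.1 x.2) := by
    intro n hn
    simp only [hG, inv_pow]
    rw [Finset.prod_inv_distrib]
    congr 1
    rw [Finset.prod_attach (Pfin k) (fun p => ((p:ℝ)) ^ n.factorization p)]
    rw [show (∏ p ∈ Pfin k, ((p:ℝ)) ^ n.factorization p)
        = ((∏ p ∈ Pfin k, p ^ n.factorization p : ℕ) : ℝ) by push_cast; ring]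
    rw [hprod n hn]
  calc ∑ n ∈ Finset.Icc 1 k, ((n : ℝ))⁻¹
      = ∑ n ∈ Finset.Icc 1 k, ∏ x ∈ (Pfin k).attach, ((x.1 : ℝ)⁻¹) ^ (G n x.1 x.2) :=
        Finset.sum_congr rfl hterm
    _ = ∑ g ∈ (Finset.Icc 1 k).image G, ∏ x ∈ (Pfin k).attach, ((x.1 : ℝ)⁻¹) ^ (g x.1 x.2) :=
        (Finset.sum_image (f := fun t => ∏ x ∈ (Pfin k).attach, ((x.1 : ℝ)⁻¹) ^ (t x.1 x.2)) hinj).symm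
    _ ≤ ∑ g ∈ (Pfin k).pi (fun p => Finset.range (Nat.log p k + 1)),
          ∏ x ∈ (Pfin k).attach, ((x.1 : ℝ)⁻¹) ^ (g x.1 x.2) := by
        refine Finset.sum_le_sum_of_subset_of_nonneg himg fun g _ _ => ?_
        exact Finset.prod_nonneg fun x _ => pow_nonneg (by positivity) _

lemma geom_bound {p : ℕ} (hp : 2 ≤ p) (n : ℕ) :
    ∑ i ∈ Finset.range n, ((p : ℝ)⁻¹) ^ i ≤ (p : ℝ) / ((p : ℝ) - 1) := by
  have hp1 : (1:ℝ) < (p:ℝ) := by exact_mod_cast hp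
  set x : ℝ := (p : ℝ)⁻¹ with hx
  have hx0 : 0 ≤ x := by positivity
  have hx1 : x < 1 := by
    rw [hx, inv_lt_one_iff₀]; right; exact hp1
  have h1 : (∑ i ∈ Finset.range n, x ^ i) * (1 - x) = 1 - x ^ n := by
    have := geom_sum_mul x n
    nlinarith [this]
  rw [le_div_iff₀ (by linarith : (0:ℝ) < (p:ℝ) - 1)]
  have h2 : ((p:ℝ) - 1) = (1 - x) * p := by
    rw [hx, sub_mul, one_mul, inv_mul_cancel₀ (ne_of_gt (by linarith))]
  rw [h2, ← mul_assoc, h1]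
  nlinarith [pow_nonneg hx0 n]

lemma harmonic_le_prod (k : ℕ) :
    Real.log (k + 1) ≤ ∏ p ∈ Pfin k, (p : ℝ) / ((p : ℝ) - 1) := by
  have hsum := sum_inv_le_prod_sum k
  have h0 : Real.log (k + 1) ≤ ((harmonic k : ℚ) : ℝ) := by
    have := log_add_one_le_harmonic k
    exact_mod_cast this
  have h1 : ((harmonic k : ℚ) : ℝ) = ∑ n ∈ Finset.Icc 1 k, ((n : ℝ))⁻¹ := by
    rw [harmonic_eq_sum_Icc]
    push_cast
    rfl
  have h2 : ∏ p ∈ Pfin k, ∑ i ∈ Finset.range (Nat.log p k + 1), ((p : ℝ)⁻¹) ^ i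
      ≤ ∏ p ∈ Pfin k, (p : ℝ) / ((p : ℝ) - 1) := by
    refine Finset.prod_le_prod (fun p hp => ?_) (fun p hp => ?_)
    · exact Finset.sum_nonneg fun i _ => pow_nonneg (by positivity) _
    · exact geom_bound (Finset.mem_filter.mp hp).2.two_le _
  linarith [h0, h1 ▸ h0]

lemma ratio_ge (k : ℕ) (hk : 2 ≤ k) (hkp : Nat.Prime (k + 1)) :
    (∏ p ∈ Pfin k, (p : ℝ) / ((p : ℝ) - 1)) * Fr k ≤ Fr (k + 1) := by
  classical
  have hins : Pfin (k + 1) = insert (k + 1) (Pfin k) := by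
    ext q
    simp only [Pfin, Finset.mem_insert, Finset.mem_filter, Finset.mem_range]
    constructor
    · rintro ⟨hq, hqp⟩
      rcases eq_or_ne q (k + 1) with rfl | hne
      · exact Or.inl rfl
      · exact Or.inr ⟨by omega, hqp⟩
    · rintro (rfl | ⟨hq, hqp⟩)
      · exact ⟨by omega, hkp⟩
      · exact ⟨by omega, hqp⟩
  have hnotmem : (k + 1) ∉ Pfin k := by
    simp [Pfin, Finset.mem_filter, Finset.mem_range]
  have hlogk : Nat.log (k + 1) (k + 1) = 1 := by
    refine Nat.log_eq_of_pow_le_of_lt_pow (by simp) ?_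
    have h2 : 2 ≤ k + 1 := by omega
    calc k + 1 < (k + 1) * 2 := by omega
      _ ≤ (k + 1) * (k + 1) := Nat.mul_le_mul_left _ h2
      _ = (k + 1) ^ (1 + 1) := by ring
  have hd0 : digit 0 (k + 1) (k + 1) = 0 := by simp [digit]
  have hd1 : digit 1 (k + 1) (k + 1) = 1 := by
    simp [digit, Nat.div_self (by omega : 0 < k + 1)]
    omega
  have hhead : ∏ i ∈ Finset.range (Nat.log (k + 1) (k + 1) + 1),
      ((k + 1 : ℕ) : ℝ) / (((k + 1 : ℕ) : ℝ) - (digit i (k + 1) (k + 1) : ℝ))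
      = ((k : ℝ) + 1) / (k : ℝ) := by
    rw [hlogk, Finset.prod_range_succ, Finset.prod_range_one, hd0, hd1]
    push_cast
    rw [sub_zero, div_self (by positivity : ((k:ℝ) + 1) ≠ 0), one_mul]
    norm_num
  conv_rhs => rw [Fr]
  rw [hins, Finset.prod_insert hnotmem, hhead]
  have hper : ∀ p ∈ Pfin k,
      ((p : ℝ) / ((p : ℝ) - 1)) * ∏ i ∈ Finset.range (Nat.log p k + 1),
          (p : ℝ) / ((p : ℝ) - (digit i p k : ℝ))
      ≤ ∏ i ∈ Finset.range (Nat.log p (k + 1) + 1),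
          (p : ℝ) / ((p : ℝ) - (digit i p (k + 1) : ℝ)) := by
    intro p hp
    obtain ⟨hpr, hpp⟩ := Finset.mem_filter.mp hp
    rw [Finset.mem_range] at hpr
    have hpk : p ≤ k := by omega
    have hp2 : 2 ≤ p := hpp.two_le
    have hnd : ¬ p ∣ (k + 1) := by
      intro h
      have := (Nat.prime_dvd_prime_iff_eq hpp hkp).mp h
      omega
    have hlog : Nat.log p (k + 1) = Nat.log p k := by
      refine Nat.log_eq_of_pow_le_of_lt_pow
        (le_trans (Nat.pow_log_le_self p (by omega)) (by omega)) ?_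
      have h1 : k < p ^ (Nat.log p k + 1) := Nat.lt_pow_succ_log_self hpp.one_lt k
      have h2 : k + 1 ≠ p ^ (Nat.log p k + 1) := by
        intro h
        exact hnd (h ▸ dvd_pow_self p (Nat.succ_ne_zero _))
      omega
    set a := k % p with ha
    have hmod : (k + 1) % p = (a + 1) % p := by
      rw [Nat.add_mod, Nat.mod_eq_of_lt (by omega : 1 < p)]
    have halt : a + 1 < p := by
      have h1 : a < p := Nat.mod_lt _ (by omega)
      rcases eq_or_lt_of_le (by omega : a + 1 ≤ p) with h | h
      · exfalso
        apply hnd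
        apply Nat.dvd_of_mod_eq_zero
        rw [hmod, h, Nat.mod_self]
      · exact h
    have hd0k : digit 0 p k = a := by simp [digit, ha]
    have hd0k1 : digit 0 p (k + 1) = a + 1 := by
      simp only [digit, pow_zero, Nat.div_one]
      rw [hmod, Nat.mod_eq_of_lt halt]
    have hdi : ∀ i, digit (i + 1) p (k + 1) = digit (i + 1) p k := by
      intro i
      simp only [digit]
      rw [Nat.succ_div_of_not_dvd]
      intro h
      exact hnd ((dvd_pow_self p (Nat.succ_ne_zero i)).trans h)
    rw [hlog, Finset.prod_range_succ', Finset.prod_range_succ']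
    have hT : (∏ i ∈ Finset.range (Nat.log p k),
        (p : ℝ) / ((p : ℝ) - (digit (i + 1) p (k + 1) : ℝ)))
        = ∏ i ∈ Finset.range (Nat.log p k),
        (p : ℝ) / ((p : ℝ) - (digit (i + 1) p k : ℝ)) :=
      Finset.prod_congr rfl fun i _ => by rw [hdi i]
    rw [hT, hd0k, hd0k1]
    set T := ∏ i ∈ Finset.range (Nat.log p k),
        (p : ℝ) / ((p : ℝ) - (digit (i + 1) p k : ℝ)) with hTdef
    have hT0 : 0 ≤ T := by
      refine Finset.prod_nonneg fun i _ => ?_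
      have hd := digit_lt hp2 (i + 1) k
      have : (digit (i + 1) p k : ℝ) < (p : ℝ) := by exact_mod_cast hd
      exact div_nonneg (by positivity) (by linarith)
    have hP2 : (2 : ℝ) ≤ (p : ℝ) := by exact_mod_cast hp2
    have hA0 : (0 : ℝ) ≤ (a : ℝ) := by positivity
    have hAP : (a : ℝ) + 2 ≤ (p : ℝ) := by exact_mod_cast halt
    have hcast : ((a + 1 : ℕ) : ℝ) = (a : ℝ) + 1 := by push_cast; ring
    rw [hcast]
    have core : (p : ℝ) / ((p : ℝ) - 1) * ((p : ℝ) / ((p : ℝ) - (a : ℝ)))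
        ≤ (p : ℝ) / ((p : ℝ) - ((a : ℝ) + 1)) := by
      have c1 : (0:ℝ) < (p : ℝ) - 1 := by linarith
      have c2 : (0:ℝ) < (p : ℝ) - (a : ℝ) := by linarith
      have c3 : (0:ℝ) < (p : ℝ) - ((a : ℝ) + 1) := by linarith
      rw [div_mul_div_comm, div_le_div_iff₀ (by positivity) c3]
      nlinarith [mul_nonneg (by linarith : (0:ℝ) ≤ (p:ℝ)) hA0]
    calc (p : ℝ) / ((p : ℝ) - 1) * (T * ((p : ℝ) / ((p : ℝ) - (a : ℝ))))
        = T * ((p : ℝ) / ((p : ℝ) - 1) * ((p : ℝ) / ((p : ℝ) - (a : ℝ)))) := by ring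
      _ ≤ T * ((p : ℝ) / ((p : ℝ) - ((a : ℝ) + 1))) := mul_le_mul_of_nonneg_left core hT0
  have h1le : (1 : ℝ) ≤ ((k : ℝ) + 1) / (k : ℝ) := by
    rw [le_div_iff₀ (by positivity : (0:ℝ) < (k:ℝ))]
    linarith
  have hg1nn : 0 ≤ ∏ p ∈ Pfin k, ∏ i ∈ Finset.range (Nat.log p (k + 1) + 1),
      (p : ℝ) / ((p : ℝ) - (digit i p (k + 1) : ℝ)) := by
    refine Finset.prod_nonneg fun p hp => Finset.prod_nonneg fun i _ => ?_
    have hp2 := (Finset.mem_filter.mp hp).2.two_le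
    have : (digit i p (k+1) : ℝ) < (p : ℝ) := by exact_mod_cast digit_lt hp2 i (k+1)
    exact div_nonneg (by positivity) (by linarith)
  calc (∏ p ∈ Pfin k, (p : ℝ) / ((p : ℝ) - 1)) * Fr k
      = ∏ p ∈ Pfin k, (((p : ℝ) / ((p : ℝ) - 1)) *
          ∏ i ∈ Finset.range (Nat.log p k + 1),
            (p : ℝ) / ((p : ℝ) - (digit i p k : ℝ))) := by
        rw [Fr, Finset.prod_mul_distrib]
    _ ≤ ∏ p ∈ Pfin k, ∏ i ∈ Finset.range (Nat.log p (k + 1) + 1),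
          (p : ℝ) / ((p : ℝ) - (digit i p (k + 1) : ℝ)) := by
        refine Finset.prod_le_prod (fun p hp => ?_) hper
        obtain ⟨hpr, hpp⟩ := Finset.mem_filter.mp hp
        have hp2 := hpp.two_le
        have hP2 : (2 : ℝ) ≤ (p : ℝ) := by exact_mod_cast hp2
        refine mul_nonneg (div_nonneg (by positivity) (by linarith)) ?_
        refine Finset.prod_nonneg fun i _ => ?_
        have : (digit i p k : ℝ) < (p : ℝ) := by exact_mod_cast digit_lt hp2 i k
        exact div_nonneg (by positivity) (by linarith)
    _ ≤ (((k : ℝ) + 1) / (k : ℝ)) * ∏ p ∈ Pfin k,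
          ∏ i ∈ Finset.range (Nat.log p (k + 1) + 1),
            (p : ℝ) / ((p : ℝ) - (digit i p (k + 1) : ℝ)) :=
        le_mul_of_one_le_left hg1nn h1le

/-- There exist `C > 0` and `K` such that for every `k ≥ K` with `k+1` prime,
`ĝ(k+1)/ĝ(k) ≥ C · log k`. -/
theorem ghat_ratio_lower_bound :
    ∃ C : ℝ, 0 < C ∧ ∃ K : ℕ, ∀ k : ℕ, K ≤ k → Nat.Prime (k + 1) →
      C * Real.log k ≤ (ghat (k + 1) : ℝ) / (ghat k : ℝ) := by
  refine ⟨1, one_pos, 2, fun k hk hkp => ?_⟩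
  rw [one_mul, ghat_cast, ghat_cast]
  have hk0 : (0:ℝ) < (k:ℝ) := by
    have : (2:ℝ) ≤ (k:ℝ) := by exact_mod_cast hk
    linarith
  have h1 : Real.log k ≤ Real.log ((k:ℝ) + 1) :=
    Real.log_le_log hk0 (by linarith)
  have h2 := harmonic_le_prod k
  have h3 := ratio_ge k hk hkp
  calc Real.log k ≤ Real.log ((k:ℝ) + 1) := h1
    _ ≤ ∏ p ∈ Pfin k, (p : ℝ) / ((p : ℝ) - 1) := h2
    _ ≤ Fr (k + 1) / Fr k := by
        rw [le_div_iff₀ (Fr_pos k)]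
        exact h3
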